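/- For r ∈ (-∞,0) ∪ [1,∞) and p ≠ 0, the power function f_r(x) = x^r is hyperbolic p-convex on the interval (0, √(r(r-1))/|p|) and hyperbolic p-concave on (√(r(r-1))/|p|, ∞). -/

import Mathlib

open Real MeasureTheory

def HypPConvexOn (p : ℝ) (I : Set ℝ) (f : ℝ → ℝ) : Prop :=
  ∀ a ∈ I, ∀ b ∈ I, a < b → ∀ x ∈ Set.Icc a b,
    f x ≤ (Real.sinh (p * (b - x)) / Real.sinh (p * (b - a))) * f a +
          (Real.sinh (p * (x - a)) / Real.sinh (p * (b - a))) * f b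

def HypPConcaveOn (p : ℝ) (I : Set ℝ) (f : ℝ → ℝ) : Prop :=
  ∀ a ∈ I, ∀ b ∈ I, a < b → ∀ x ∈ Set.Icc a b,
    f x ≥ (Real.sinh (p * (b - x)) / Real.sinh (p * (b - a))) * f a +
          (Real.sinh (p * (x - a)) / Real.sinh (p * (b - a))) * f b

open Set

lemma maxprin (a b q : ℝ) (hab : a < b) (hq : 0 < q)
    (h h' h'' : ℝ → ℝ)
    (hc : ContinuousOn h (Set.Icc a b))
    (hd1 : ∀ y ∈ Set.Ioo a b, HasDerivAt h (h' y) y)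
    (hd2 : ∀ y ∈ Set.Ioo a b, HasDerivAt h' (h'' y) y)
    (key : ∀ y ∈ Set.Ioo a b, q * h y ≤ h'' y)
    (ha : h a ≤ 0) (hb : h b ≤ 0) :
    ∀ x ∈ Set.Icc a b, h x ≤ 0 := by
  by_contra hcon
  push_neg at hcon
  obtain ⟨x0, hx0, hx0pos⟩ := hcon
  obtain ⟨c, hc_mem, hmax⟩ := isCompact_Icc.exists_isMaxOn (Set.nonempty_Icc.2 hab.le) hc
  have hcpos : 0 < h c := lt_of_lt_of_le hx0pos (hmax hx0)
  have hca : a < c := lt_of_le_of_ne hc_mem.1 (by rintro rfl; exact absurd hcpos (not_lt.2 ha))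
  have hcb : c < b := lt_of_le_of_ne hc_mem.2 (by rintro rfl; exact absurd hcpos (not_lt.2 hb))
  have hcIoo : c ∈ Set.Ioo a b := ⟨hca, hcb⟩
  have hlocal : IsLocalMax h c := hmax.isLocalMax (Icc_mem_nhds hca hcb)
  have hderiv0 : h' c = 0 := hlocal.hasDerivAt_eq_zero (hd1 c hcIoo)
  have h2pos : 0 < h'' c := lt_of_lt_of_le (mul_pos hq hcpos) (key c hcIoo)
  have hslope := hasDerivAt_iff_tendsto_slope.1 (hd2 c hcIoo)
  have hev : ∀ᶠ x in nhdsWithin c {c}ᶜ, 0 < slope h' c x :=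
    hslope.eventually (eventually_gt_nhds h2pos)
  have hev' : ∀ᶠ x in nhdsWithin c (Set.Ioi c), 0 < slope h' c x :=
    hev.filter_mono (nhdsWithin_mono c (fun x hx => ne_of_gt hx))
  have hev2 : ∀ᶠ x in nhdsWithin c (Set.Ioi c), x ∈ Set.Ioo a b :=
    mem_nhdsWithin_of_mem_nhds (Ioo_mem_nhds hca hcb)
  have hev3 := hev'.and hev2
  rw [Filter.eventually_iff, mem_nhdsGT_iff_exists_Ioc_subset] at hev3
  obtain ⟨d, hd, hdsub⟩ := hev3
  have hd' : c < d := hd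
  set e := min d ((c + b) / 2) with he
  have hce : c < e := lt_min hd' (by linarith)
  have heb : e < b := lt_of_le_of_lt (min_le_right _ _) (by linarith)
  have hsub : Set.Icc c e ⊆ Set.Icc a b :=
    Set.Icc_subset_Icc hca.le heb.le
  have hmono : StrictMonoOn h (Set.Icc c e) := by
    apply strictMonoOn_of_deriv_pos (convex_Icc _ _) (hc.mono hsub)
    intro x hx
    rw [interior_Icc] at hx
    have hx' : x ∈ Set.Ioc c d := ⟨hx.1, le_trans hx.2.le (min_le_left _ _)⟩
    obtain ⟨hsl, hxab⟩ := hdsub hx'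
    have hxc : x - c ≠ 0 := sub_ne_zero.2 (ne_of_gt hx.1)
    have hpos : 0 < h' x := by
      rw [slope_def_field, hderiv0, sub_zero] at hsl
      have := (div_pos_iff.1 hsl)
      rcases this with ⟨h1, _⟩ | ⟨_, h2⟩
      · exact h1
      · linarith [sub_pos.2 hx.1]
    rw [(hd1 x hxab).deriv]
    exact hpos
  have hlt : h c < h e := hmono (Set.left_mem_Icc.2 hce.le) (Set.right_mem_Icc.2 hce.le) hce
  have hle : h e ≤ h c := hmax (hsub (Set.right_mem_Icc.2 hce.le))
  linarith

lemma chord_le (p a b : ℝ) (hp : p ≠ 0) (hab : a < b) (f f' f'' : ℝ → ℝ)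
    (hc : ContinuousOn f (Set.Icc a b))
    (hd1 : ∀ y ∈ Set.Ioo a b, HasDerivAt f (f' y) y)
    (hd2 : ∀ y ∈ Set.Ioo a b, HasDerivAt f' (f'' y) y)
    (key : ∀ y ∈ Set.Ioo a b, p ^ 2 * f y ≤ f'' y) :
    ∀ x ∈ Set.Icc a b,
      f x ≤ (Real.sinh (p * (b - x)) / Real.sinh (p * (b - a))) * f a +
            (Real.sinh (p * (x - a)) / Real.sinh (p * (b - a))) * f b := by
  set S := Real.sinh (p * (b - a)) with hS
  have hSne : S ≠ 0 := by
    rw [hS, ne_eq, Real.sinh_eq_zero]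
    exact mul_ne_zero hp (by linarith)
  set g : ℝ → ℝ := fun y => f y -
    ((Real.sinh (p * (b - y)) / S) * f a + (Real.sinh (p * (y - a)) / S) * f b) with hg
  set g' : ℝ → ℝ := fun y => f' y -
    ((Real.cosh (p * (b - y)) * (-p) / S) * f a + (Real.cosh (p * (y - a)) * p / S) * f b) with hg'
  set g'' : ℝ → ℝ := fun y => f'' y -
    ((Real.sinh (p * (b - y)) * (p * p) / S) * f a + (Real.sinh (p * (y - a)) * (p * p) / S) * f b) with hg''
  have hinner1 : ∀ y : ℝ, HasDerivAt (fun y => p * (b - y)) (-p) y := by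
    intro y
    simpa using ((hasDerivAt_id y).const_sub b).const_mul p
  have hinner2 : ∀ y : ℝ, HasDerivAt (fun y => p * (y - a)) p y := by
    intro y
    simpa using ((hasDerivAt_id y).sub_const a).const_mul p
  have hsinh1 : ∀ y : ℝ, HasDerivAt (fun y => Real.sinh (p * (b - y)))
      (Real.cosh (p * (b - y)) * (-p)) y := fun y =>
    (hinner1 y).sinh
  have hsinh2 : ∀ y : ℝ, HasDerivAt (fun y => Real.sinh (p * (y - a)))
      (Real.cosh (p * (y - a)) * p) y := fun y =>
    (hinner2 y).sinh
  have hcosh1 : ∀ y : ℝ, HasDerivAt (fun y => Real.cosh (p * (b - y)))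
      (Real.sinh (p * (b - y)) * (-p)) y := fun y =>
    (hinner1 y).cosh
  have hcosh2 : ∀ y : ℝ, HasDerivAt (fun y => Real.cosh (p * (y - a)))
      (Real.sinh (p * (y - a)) * p) y := fun y =>
    (hinner2 y).cosh
  have hgd1 : ∀ y ∈ Set.Ioo a b, HasDerivAt g (g' y) y := by
    intro y hy
    exact (hd1 y hy).sub ((((hsinh1 y).div_const S).mul_const (f a)).add
      (((hsinh2 y).div_const S).mul_const (f b)))
  have hgd2 : ∀ y ∈ Set.Ioo a b, HasDerivAt g' (g'' y) y := by
    intro y hy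
    have := (hd2 y hy).sub (((((hcosh1 y).mul_const (-p)).div_const S).mul_const (f a)).add
      ((((hcosh2 y).mul_const p).div_const S).mul_const (f b)))
    exact this.congr_deriv (by simp only [hg'']; ring)
  have hgc : ContinuousOn g (Set.Icc a b) := by
    apply hc.sub
    apply ContinuousOn.add
    · exact (((Real.continuous_sinh.comp (continuous_const.mul
        (continuous_const.sub continuous_id))).div_const S).mul continuous_const).continuousOn
    · exact (((Real.continuous_sinh.comp (continuous_const.mul
        ((continuous_id.sub continuous_const)))).div_const S).mul continuous_const).continuousOn
  have hkey : ∀ y ∈ Set.Ioo a b, p ^ 2 * g y ≤ g'' y := by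
    intro y hy
    have e1 : p ^ 2 * g y - g'' y = p ^ 2 * f y - f'' y := by
      simp only [hg, hg'']
      ring
    have := key y hy
    linarith
  have hga : g a ≤ 0 := by
    rw [hg]
    simp only []
    rw [show a - a = 0 by ring]
    rw [mul_zero, Real.sinh_zero]
    field_simp
    rw [← hS]; simp
  have hgb : g b ≤ 0 := by
    rw [hg]
    simp only []
    rw [show b - b = 0 by ring]
    rw [mul_zero, Real.sinh_zero]
    field_simp
    rw [← hS]; simp
  intro x hx
  have := maxprin a b (p ^ 2) hab (by positivity) g g' g'' hgc hgd1 hgd2 hkey hga hgb x hx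
  rw [hg] at this
  simp only [] at this
  linarith

lemma chord_ge (p a b : ℝ) (hp : p ≠ 0) (hab : a < b) (f f' f'' : ℝ → ℝ)
    (hc : ContinuousOn f (Set.Icc a b))
    (hd1 : ∀ y ∈ Set.Ioo a b, HasDerivAt f (f' y) y)
    (hd2 : ∀ y ∈ Set.Ioo a b, HasDerivAt f' (f'' y) y)
    (key : ∀ y ∈ Set.Ioo a b, f'' y ≤ p ^ 2 * f y) :
    ∀ x ∈ Set.Icc a b,
      f x ≥ (Real.sinh (p * (b - x)) / Real.sinh (p * (b - a))) * f a +
            (Real.sinh (p * (x - a)) / Real.sinh (p * (b - a))) * f b := by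
  intro x hx
  have := chord_le p a b hp hab (fun y => -f y) (fun y => -f' y) (fun y => -f'' y)
    hc.neg (fun y hy => (hd1 y hy).neg) (fun y hy => (hd2 y hy).neg)
    (fun y hy => by have := key y hy; linarith) x hx
  linarith

theorem power_hyp_aux
    (r p : ℝ) (hr : r < 0 ∨ 1 ≤ r) (hp : p ≠ 0) :
    HypPConvexOn p (Set.Ioo 0 (Real.sqrt (r * (r - 1)) / |p|)) (fun x => x ^ r) ∧
      HypPConcaveOn p (Set.Ioi (Real.sqrt (r * (r - 1)) / |p|)) (fun x => x ^ r) := by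
  have hK : 0 ≤ r * (r - 1) := by
    rcases hr with h | h
    · nlinarith
    · nlinarith
  have hpabs : 0 < |p| := abs_pos.2 hp
  set R := Real.sqrt (r * (r - 1)) / |p| with hR
  have hRnonneg : 0 ≤ R := div_nonneg (Real.sqrt_nonneg _) hpabs.le
  -- common facts for f on positive reals
  have hderiv1 : ∀ y : ℝ, 0 < y → HasDerivAt (fun x : ℝ => x ^ r) (r * y ^ (r - 1)) y :=
    fun y hy => Real.hasDerivAt_rpow_const (Or.inl (ne_of_gt hy))
  have hderiv2 : ∀ y : ℝ, 0 < y →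
      HasDerivAt (fun x : ℝ => r * x ^ (r - 1)) (r * ((r - 1) * y ^ (r - 2))) y := by
    intro y hy
    have := (Real.hasDerivAt_rpow_const (p := r - 1) (Or.inl (ne_of_gt hy))).const_mul r
    rw [show r - 1 - 1 = r - 2 by ring] at this
    exact this
  have hcontOn : ∀ a b : ℝ, 0 < a → ContinuousOn (fun x : ℝ => x ^ r) (Set.Icc a b) := by
    intro a b ha
    apply ContinuousOn.rpow_const continuousOn_id
    intro x hx
    exact Or.inl (ne_of_gt (lt_of_lt_of_le ha hx.1))
  have hsq : ∀ y : ℝ, 0 < y → (p ^ 2 * y ^ r - r * ((r - 1) * y ^ (r - 2)))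
      = y ^ (r - 2) * (p ^ 2 * y ^ 2 - r * (r - 1)) := by
    intro y hy
    have : y ^ r = y ^ (r - 2) * y ^ 2 := by
      rw [← Real.rpow_two, ← Real.rpow_add hy]
      ring_nf
    rw [this]; ring
  constructor
  · intro a ha b hb hab x hx
    have ha0 : 0 < a := ha.1
    exact chord_le p a b hp hab (fun x => x ^ r) (fun y => r * y ^ (r - 1))
      (fun y => r * ((r - 1) * y ^ (r - 2)))
      (hcontOn a b ha0)
      (fun y hy => hderiv1 y (lt_trans ha0 hy.1))
      (fun y hy => hderiv2 y (lt_trans ha0 hy.1))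
      (fun y hy => by
        have hy0 : 0 < y := lt_trans ha0 hy.1
        have hyR : y < R := lt_trans hy.2 hb.2
        have h1 : y * |p| < Real.sqrt (r * (r - 1)) := by
          rw [hR, lt_div_iff₀ hpabs] at hyR
          exact hyR
        have h2 : (y * |p|) ^ 2 < r * (r - 1) := by
          have := pow_lt_pow_left₀ h1 (by positivity) two_ne_zero
          rwa [Real.sq_sqrt hK] at this
        have h3 : p ^ 2 * y ^ 2 < r * (r - 1) := by
          have : (y * |p|) ^ 2 = p ^ 2 * y ^ 2 := by
            rw [mul_pow, sq_abs]; ring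
          linarith [this ▸ h2]
        have h4 := hsq y hy0
        show p ^ 2 * y ^ r ≤ r * ((r - 1) * y ^ (r - 2))
        nlinarith [Real.rpow_pos_of_pos hy0 (r - 2)])
      x hx
  · intro a ha b hb hab x hx
    have ha0 : 0 < a := lt_of_le_of_lt hRnonneg ha
    exact chord_ge p a b hp hab (fun x => x ^ r) (fun y => r * y ^ (r - 1))
      (fun y => r * ((r - 1) * y ^ (r - 2)))
      (hcontOn a b ha0)
      (fun y hy => hderiv1 y (lt_trans ha0 hy.1))
      (fun y hy => hderiv2 y (lt_trans ha0 hy.1))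
      (fun y hy => by
        have hy0 : 0 < y := lt_trans ha0 hy.1
        have hyR : R < y := lt_trans ha hy.1
        have h1 : Real.sqrt (r * (r - 1)) < y * |p| := by
          rw [hR, div_lt_iff₀ hpabs] at hyR
          exact hyR
        have h2 : r * (r - 1) ≤ (y * |p|) ^ 2 := by
          have := pow_le_pow_left₀ (Real.sqrt_nonneg _) h1.le 2
          rwa [Real.sq_sqrt hK] at this
        have h3 : r * (r - 1) ≤ p ^ 2 * y ^ 2 := by
          have he : (y * |p|) ^ 2 = p ^ 2 * y ^ 2 := by
            rw [mul_pow, sq_abs]; ring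
          linarith [he ▸ h2]
        have h4 := hsq y hy0
        show r * ((r - 1) * y ^ (r - 2)) ≤ p ^ 2 * y ^ r
        nlinarith [Real.rpow_pos_of_pos hy0 (r - 2)])
      x hx

theorem power_hyp_convex_concave
    (r p : ℝ) (hr : r < 0 ∨ 1 ≤ r) (hp : p ≠ 0) :
    HypPConvexOn p (Set.Ioo 0 (Real.sqrt (r * (r - 1)) / |p|)) (fun x => x ^ r) ∧
      HypPConcaveOn p (Set.Ioi (Real.sqrt (r * (r - 1)) / |p|)) (fun x => x ^ r) := by
  exact power_hyp_aux r p hr hp
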